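/- Let A be a commutative monoid with zero and S ⊆ A a multiplicative subset with U_S nonempty (i.e., 0 ∉ S is not forced but some prime ideal avoids S). Then there is a prime ideal m in U_S containing all ideals of A that do not intersect S; in particular m contains all other prime ideals in U_S, and S⁻¹A ≅ A_m. -/

import Mathlib

/-- An ideal of a commutative monoid with zero: a nonempty subset `I` with `I·A ⊆ I`. -/
def IsMonIdeal {A : Type*} [CommMonoidWithZero A] (I : Set A) : Prop :=
  I.Nonempty ∧ ∀ a ∈ I, ∀ b : A, a * b ∈ I

/-- A prime ideal of a commutative monoid with zero. -/
def IsMonPrimeIdeal {A : Type*} [CommMonoidWithZero A] (p : Set A) : Prop :=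
  IsMonIdeal p ∧ 1 ∉ p ∧ ∀ a b : A, a * b ∈ p → a ∈ p ∨ b ∈ p

/-- The complement of a prime ideal of a monoid, as a submonoid. -/
def monPrimeCompl {A : Type*} [CommMonoidWithZero A] {p : Set A}
    (hp : IsMonPrimeIdeal p) : Submonoid A where
  carrier := pᶜ
  one_mem' := hp.2.1
  mul_mem' := fun ha hb hab => (hp.2.2 _ _ hab).elim ha hb

/-- If some prime ideal of `A` is disjoint from the multiplicative set `S`, then there is
a prime ideal `m` disjoint from `S` containing every ideal disjoint from `S` (in particular
every prime of `U_S`), and the localization `S⁻¹A` coincides with the localization `A_m`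
at `m` (via the canonical identification fixing the images of elements of `A`). -/
theorem exists_maximal_prime_avoiding_and_loc_eq {A : Type*} [CommMonoidWithZero A]
    (S : Submonoid A) (hUS : ∃ p : Set A, IsMonPrimeIdeal p ∧ p ∩ ↑S = ∅) :
    ∃ (m : Set A) (hm : IsMonPrimeIdeal m), m ∩ ↑S = ∅ ∧
      (∀ I : Set A, IsMonIdeal I → I ∩ ↑S = ∅ → I ⊆ m) ∧
      (∀ p : Set A, IsMonPrimeIdeal p → p ∩ ↑S = ∅ → p ⊆ m) ∧
      ∃ e : Localization S ≃* Localization (monPrimeCompl hm),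
        ∀ a : A, e (Localization.mk a 1) = Localization.mk a 1 := by
  obtain ⟨p, hp, hpS⟩ := hUS
  have h0p : (0 : A) ∈ p := by
    obtain ⟨a, ha⟩ := hp.1.1
    simpa using hp.1.2 a ha 0
  have h0S : (0 : A) ∉ (S : Set A) := fun h =>
    (Set.eq_empty_iff_forall_notMem.mp hpS 0) ⟨h0p, h⟩
  set m : Set A := {a | ∀ b : A, a * b ∉ S} with hmdef
  have hm : IsMonPrimeIdeal m := by
    refine ⟨⟨⟨0, fun b => by simpa using h0S⟩, fun a ha b c hc => ?_⟩, ?_, ?_⟩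
    · exact ha (b * c) (by rwa [← mul_assoc])
    · intro h; exact h 1 (by simpa using S.one_mem)
    · intro a b hab
      by_contra h
      push_neg at h
      obtain ⟨ha, hb⟩ := h
      simp only [hmdef, Set.mem_setOf_eq, not_forall, not_not] at ha hb
      obtain ⟨c, hc⟩ := ha
      obtain ⟨d, hd⟩ := hb
      refine hab (c * d) ?_
      rw [mul_mul_mul_comm]
      exact S.mul_mem hc hd
  refine ⟨m, hm, ?_, ?_, ?_, ?_⟩
  · apply Set.eq_empty_iff_forall_notMem.mpr
    rintro a ⟨ha, haS⟩
    exact ha 1 (by simpa using haS)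
  · intro I hI hIS a ha b hb
    exact (Set.eq_empty_iff_forall_notMem.mp hIS (a * b)) ⟨hI.2 a ha b, hb⟩
  · intro q hq hqS a ha b hb
    exact (Set.eq_empty_iff_forall_notMem.mp hqS (a * b)) ⟨hq.1.2 a ha b, hb⟩
  · have hcompl : ∀ t : A, t ∉ m → ∃ b : A, t * b ∈ S := by
      intro t ht
      simp only [hmdef, Set.mem_setOf_eq, not_forall, not_not] at ht
      exact ht
    set f := Localization.monoidOf S with hf
    set g : Submonoid.LocalizationMap (monPrimeCompl hm) (Localization S) :=
      { toFun := f
        map_mul' := map_mul f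
        isLocalizationMap := {
        map_units := by
          rintro ⟨t, ht⟩
          obtain ⟨b, hb⟩ := hcompl t ht
          have hu : IsUnit (f (t * b)) := f.map_units ⟨t * b, hb⟩
          rw [map_mul] at hu
          exact isUnit_of_mul_isUnit_left hu
        surj := by
          intro z
          obtain ⟨⟨a, s⟩, hs⟩ := f.surj z
          refine ⟨⟨a, ⟨(s : A), ?_⟩⟩, hs⟩
          intro h
          exact h 1 (by simpa using s.2)
        exists_of_eq := by
          intro x y hxy
          obtain ⟨c, hc⟩ := f.exists_of_eq hxy
          refine ⟨⟨(c : A), ?_⟩, hc⟩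
          intro h
          exact h 1 (by simpa using c.2) } }
    refine ⟨g.mulEquivOfLocalizations (Localization.monoidOf (monPrimeCompl _)), ?_⟩
    intro a
    rw [Localization.mk_one_eq_monoidOf_mk, Localization.mk_one_eq_monoidOf_mk]
    exact g.lift_eq (Localization.monoidOf (monPrimeCompl hm)).map_units a
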